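/- Suppose a system ẋ = F(t, x, u) is ISS with (β, γ̂) for a closed set A, i.e., ‖x(t)‖_A ≤ β(‖x(t_0)‖_A, t − t_0) + γ̂(sup_{s∈[t_0,t)} ‖u(s)‖_∞) for all t ≥ t_0. Then for any M_{x_0} > 0, M_u > 0, and any decreasing function w : [0, ∞) → (0, 1] with lim_{t→∞} w(t) = 0, there exists γ ∈ 𝒦_∞ such that every solution x with ‖x(t_0)‖_A ≤ M_{x_0} and sup_{s∈[t_0,t)} ‖u(s)‖_∞ ≤ M_u satisfies ‖x(t)‖_A ≤ β(‖x(t_0)‖_A, t − t_0) + γ(δ_t) for all t > t_0, where δ_t := sup_{s∈[t_0,t)} ‖u(s)‖_∞ · w(t − s). -/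

import Mathlib

open Filter

/-- Class 𝒦_∞: continuous, strictly increasing and unbounded on `[0, ∞)`, vanishing at 0. -/
def ClassKinf (γ : ℝ → ℝ) : Prop :=
  ContinuousOn γ (Set.Ici 0) ∧ StrictMonoOn γ (Set.Ici 0) ∧ γ 0 = 0 ∧
    Tendsto γ atTop atTop

/-- Class 𝒦𝓛: class 𝒦 in the first argument for each fixed time, decreasing to 0 in the
second argument, and nonnegative. -/
def ClassKL (β : ℝ → ℝ → ℝ) : Prop :=
  (∀ t ∈ Set.Ici (0 : ℝ), ContinuousOn (fun r => β r t) (Set.Ici 0) ∧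
      StrictMonoOn (fun r => β r t) (Set.Ici 0) ∧ β 0 t = 0) ∧
  (∀ r > (0 : ℝ), AntitoneOn (β r) (Set.Ici 0) ∧ Tendsto (β r) atTop (nhds 0)) ∧
  (∀ r ≥ (0 : ℝ), ∀ t ≥ (0 : ℝ), 0 ≤ β r t)

open Set MeasureTheory intervalIntegral in
theorem kinf_majorant (H : ℝ → ℝ) (hmono : Monotone H) (hzero : ∀ x ≤ (0:ℝ), H x = 0)
    (hlim : Tendsto H (nhdsWithin 0 (Set.Ici 0)) (nhds 0)) :
    ∃ γ : ℝ → ℝ, ClassKinf γ ∧ ∀ δ ≥ (0:ℝ), H δ ≤ γ δ := by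
  have hHnn : ∀ x, 0 ≤ H x := by
    intro x
    rcases le_or_gt x 0 with h | h
    · rw [hzero x h]
    · rw [← hzero 0 le_rfl]; exact hmono h.le
  set Φ : ℝ → ℝ := fun δ => ∫ v in (1:ℝ)..2, H (δ * v) with hΦdef
  have hint : ∀ (δ : ℝ), 0 ≤ δ → ∀ a b : ℝ,
      IntervalIntegrable (fun v => H (δ * v)) volume a b := by
    intro δ hδ a b
    exact (hmono.comp (fun v₁ v₂ h => mul_le_mul_of_nonneg_left h hδ)).intervalIntegrable
  have hΦ_ge : ∀ δ ≥ (0:ℝ), H δ ≤ Φ δ := by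
    intro δ hδ
    have : ((1:ℝ) ≤ 2) := one_le_two
    have h1 : (∫ _v in (1:ℝ)..2, H δ) ≤ ∫ v in (1:ℝ)..2, H (δ * v) := by
      apply integral_mono_on this intervalIntegrable_const (hint δ hδ 1 2)
      intro v hv
      exact hmono (by nlinarith [hv.1])
    rw [intervalIntegral.integral_const] at h1
    norm_num at h1
    exact h1
  have hΦ_le : ∀ δ ≥ (0:ℝ), Φ δ ≤ H (2 * δ) := by
    intro δ hδ
    have h1 : (∫ v in (1:ℝ)..2, H (δ * v)) ≤ ∫ _v in (1:ℝ)..2, H (2 * δ) := by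
      apply integral_mono_on one_le_two (hint δ hδ 1 2) intervalIntegrable_const
      intro v hv
      exact hmono (by nlinarith [hv.2])
    rw [intervalIntegral.integral_const] at h1
    norm_num at h1
    exact h1
  have hΦ_nn : ∀ δ, 0 ≤ Φ δ := by
    intro δ
    exact integral_nonneg one_le_two (fun v _ => hHnn _)
  have hΦ_mono : MonotoneOn Φ (Set.Ici 0) := by
    intro a ha b hb hab
    apply integral_mono_on one_le_two (hint a ha 1 2) (hint b hb 1 2)
    intro v hv
    exact hmono (mul_le_mul_of_nonneg_right hab (by linarith [hv.1]))
  have hΦ0 : Φ 0 = 0 := by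
    have : ∀ v, H ((0:ℝ) * v) = 0 := by intro v; rw [zero_mul, hzero 0 le_rfl]
    simp only [hΦdef, this, intervalIntegral.integral_const, smul_zero]
  -- continuity
  have hintH : ∀ a b : ℝ, IntervalIntegrable H volume a b := fun a b =>
    hmono.intervalIntegrable
  set G : ℝ → ℝ := fun y => ∫ s in (0:ℝ)..y, H s with hGdef
  have hGcont : Continuous G := intervalIntegral.continuous_primitive hintH 0
  have hrepr : ∀ δ : ℝ, δ ≠ 0 → Φ δ = δ⁻¹ * (G (2 * δ) - G δ) := by
    intro δ hδ
    have h1 : (∫ v in (1:ℝ)..2, H (δ * v)) = δ⁻¹ • ∫ s in (δ * 1)..(δ * 2), H s :=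
      integral_comp_mul_left H hδ
    have h2 : (∫ s in (0:ℝ)..δ, H s) + (∫ s in δ..2*δ, H s) = ∫ s in (0:ℝ)..2*δ, H s :=
      integral_add_adjacent_intervals (hintH 0 δ) (hintH δ (2*δ))
    have h3 : (∫ s in δ..2*δ, H s) = G (2*δ) - G δ := by
      rw [hGdef]; dsimp only; linarith
    rw [hΦdef]; dsimp only
    rw [h1, show δ * 1 = δ by ring, show δ * 2 = 2 * δ by ring, h3]
    simp [smul_eq_mul]
  have hΦcont : ContinuousOn Φ (Set.Ici 0) := by
    intro x hx
    rcases eq_or_lt_of_le (Set.mem_Ici.mp hx : (0:ℝ) ≤ x) with h0 | h0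
    · -- x = 0 : squeeze
      subst h0
      rw [ContinuousWithinAt, hΦ0]
      have hup : Tendsto (fun δ => H (2 * δ)) (nhdsWithin 0 (Set.Ici 0)) (nhds 0) := by
        have hmap : Tendsto (fun δ : ℝ => 2 * δ) (nhdsWithin 0 (Set.Ici 0))
            (nhdsWithin 0 (Set.Ici 0)) := by
          apply tendsto_nhdsWithin_of_tendsto_nhds_of_eventually_within
          · have h2 : Tendsto (fun δ : ℝ => 2 * δ) (nhds 0) (nhds (2 * 0)) :=
              (continuous_mul_left 2).tendsto 0
            rw [mul_zero] at h2
            exact h2.mono_left nhdsWithin_le_nhds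
          · filter_upwards [self_mem_nhdsWithin] with δ hδ
            exact mul_nonneg (by norm_num) (Set.mem_Ici.mp hδ)
        exact hlim.comp hmap
      refine tendsto_of_tendsto_of_tendsto_of_le_of_le' tendsto_const_nhds hup ?_ ?_
      · filter_upwards with δ using hΦ_nn δ
      · filter_upwards [self_mem_nhdsWithin] with δ hδ using hΦ_le δ hδ
    · -- x > 0 : Φ = δ⁻¹ (G(2δ) - G δ) near x
      have hca : ContinuousAt (fun δ => δ⁻¹ * (G (2 * δ) - G δ)) x := by
        apply ContinuousAt.mul
        · exact (continuousAt_inv₀ (ne_of_gt h0))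
        · exact ((hGcont.comp (continuous_const.mul continuous_id)).sub hGcont).continuousAt
      have heq : (fun δ => δ⁻¹ * (G (2 * δ) - G δ)) =ᶠ[nhds x] Φ := by
        filter_upwards [Ioi_mem_nhds h0] with δ hδ
        exact (hrepr δ (ne_of_gt hδ)).symm
      exact (hca.congr heq).continuousWithinAt
  refine ⟨fun δ => δ + Φ δ, ⟨?_, ?_, ?_, ?_⟩, ?_⟩
  · exact (continuous_id.continuousOn).add hΦcont
  · intro a ha b hb hab
    exact add_lt_add_of_lt_of_le hab (hΦ_mono ha hb hab.le)
  · simp [hΦ0]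
  · apply tendsto_atTop_mono (fun δ => ?_) tendsto_id
    have := hΦ_nn δ
    show id δ ≤ δ + Φ δ
    simp only [id]; linarith
  · intro δ hδ
    have := hΦ_ge δ hδ
    show H δ ≤ δ + Φ δ
    linarith

/-- Decaying-memory ISS estimate (Lemma 2): if the ISS estimate with pair `(β, γ̂)` for a
closed set `A` holds from every initial time, then for any bounds `M_{x0}`, `M_u` and any
decreasing weight `w : [0,∞) → (0,1]` tending to 0, there is a single `γ ∈ 𝒦_∞` such that
`‖x(t)‖_A ≤ β(‖x(t_0)‖_A, t - t_0) + γ(δ_t)` with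
`δ_t = sup_{s ∈ [t_0, t)} ‖u(s)‖ w(t - s)`, for all solutions obeying the bounds. -/
theorem stmt6 {n m : ℕ} (A : Set (Fin n → ℝ)) (hA : IsClosed A)
    (β : ℝ → ℝ → ℝ) (γhat : ℝ → ℝ) (hβ : ClassKL β) (hγ : ClassKinf γhat)
    (Mx0 Mu : ℝ) (hMx0 : 0 < Mx0) (hMu : 0 < Mu)
    (w : ℝ → ℝ) (hw : ∀ t ≥ (0 : ℝ), 0 < w t ∧ w t ≤ 1)
    (hwdec : AntitoneOn w (Set.Ici 0)) (hwlim : Tendsto w atTop (nhds 0)) :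
    ∃ γ : ℝ → ℝ, ClassKinf γ ∧
      ∀ (t0 : ℝ) (x : ℝ → Fin n → ℝ) (u : ℝ → Fin m → ℝ),
        (∀ t1 t, t0 ≤ t1 → t1 ≤ t →
          Metric.infDist (x t) A ≤ β (Metric.infDist (x t1) A) (t - t1) +
            γhat (sSup ((fun s => ‖u s‖) '' Set.Ico t1 t))) →
        Metric.infDist (x t0) A ≤ Mx0 →
        (∀ s ≥ t0, ‖u s‖ ≤ Mu) →
        ∀ t > t0, Metric.infDist (x t) A ≤
          β (Metric.infDist (x t0) A) (t - t0) +
          γ (sSup ((fun s => ‖u s‖ * w (t - s)) '' Set.Ico t0 t)) := by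
  have hγmono : MonotoneOn γhat (Set.Ici 0) := hγ.2.1.monotoneOn
  have hγ0 : γhat 0 = 0 := hγ.2.2.1
  have hγnn : ∀ r, 0 ≤ r → 0 ≤ γhat r := by
    intro r hr
    rw [← hγ0]
    exact hγmono Set.self_mem_Ici hr hr
  have hγMu : 0 < γhat Mu := by
    rw [← hγ0]
    exact hγ.2.1 Set.self_mem_Ici hMu.le hMu
  set B : ℝ := β Mx0 0 + γhat Mu with hBdef
  have hβMx0 : 0 < β Mx0 0 := by
    have h := (hβ.1 0 Set.self_mem_Ici).2.1 Set.self_mem_Ici hMx0.le hMx0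
    have h0 : β 0 0 = 0 := (hβ.1 0 Set.self_mem_Ici).2.2
    calc (0:ℝ) = β 0 0 := h0.symm
      _ < β Mx0 0 := h
  have hB : 0 < B := by rw [hBdef]; linarith
  have hβBnn : ∀ s, 0 ≤ s → 0 ≤ β B s := fun s hs => hβ.2.2 B hB.le s hs
  set K : ℝ := β B 0 + γhat Mu with hKdef
  have hKnn : 0 ≤ K := by
    have := hβBnn 0 le_rfl
    rw [hKdef]; linarith
  set Tf : ℝ → ℝ := fun δ => sSup {T : ℝ | 0 ≤ T ∧ Real.sqrt δ ≤ w T} with hTfdef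
  have hTbdd : ∀ ε : ℝ, 0 < ε → BddAbove {T : ℝ | 0 ≤ T ∧ ε ≤ w T} := by
    intro ε hε
    obtain ⟨N, hN⟩ := eventually_atTop.mp (hwlim.eventually_lt_const hε)
    refine ⟨N, fun T hT => ?_⟩
    by_contra hc
    push_neg at hc
    exact absurd hT.2 (not_le.2 (hN T hc.le))
  have hTf_ge : ∀ δ : ℝ, 0 < δ → ∀ M : ℝ, 0 ≤ M → Real.sqrt δ ≤ w M → M ≤ Tf δ := by
    intro δ hδ M hM hle
    exact le_csSup (hTbdd _ (Real.sqrt_pos.2 hδ)) ⟨hM, hle⟩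
  have hTf_nonneg : ∀ δ : ℝ, 0 < δ → 0 ≤ Tf δ := by
    intro δ hδ
    rcases Set.eq_empty_or_nonempty {T : ℝ | 0 ≤ T ∧ Real.sqrt δ ≤ w T} with he | ⟨T, hT⟩
    · simp only [hTfdef, he, Real.sSup_empty, le_refl]
    · exact hT.1.trans (le_csSup (hTbdd _ (Real.sqrt_pos.2 hδ)) hT)
  have hTf_anti : ∀ a b : ℝ, 0 < a → a ≤ b → Tf b ≤ Tf a := by
    intro a b ha hab
    rcases Set.eq_empty_or_nonempty {T : ℝ | 0 ≤ T ∧ Real.sqrt b ≤ w T} with he | hne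
    · have : Tf b = 0 := by simp only [hTfdef, he, Real.sSup_empty]
      rw [this]; exact hTf_nonneg a ha
    · apply csSup_le_csSup (hTbdd _ (Real.sqrt_pos.2 ha)) hne
      intro T hT
      exact ⟨hT.1, le_trans (Real.sqrt_le_sqrt hab) hT.2⟩
  set H : ℝ → ℝ := fun δ => if δ ≤ 0 then 0 else
    β B (max (Tf δ - 1) 0) + γhat (Real.sqrt δ) + (if 2 ≤ Tf δ then 0 else K) with hHdef
  have hHval : ∀ δ : ℝ, 0 < δ → H δ =
      β B (max (Tf δ - 1) 0) + γhat (Real.sqrt δ) + (if 2 ≤ Tf δ then 0 else K) := by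
    intro δ hδ
    simp only [hHdef]
    rw [if_neg (not_le.2 hδ)]
  have hHzero : ∀ δ : ℝ, δ ≤ 0 → H δ = 0 := by
    intro δ hδ
    simp only [hHdef]
    rw [if_pos hδ]
  have hHnn : ∀ δ : ℝ, 0 ≤ H δ := by
    intro δ
    rcases le_or_gt δ 0 with h | h
    · rw [hHzero δ h]
    · rw [hHval δ h]
      have h1 := hβBnn _ (le_max_right (Tf δ - 1) 0)
      have h2 := hγnn _ (Real.sqrt_nonneg δ)
      have h3 : (0:ℝ) ≤ if 2 ≤ Tf δ then 0 else K := by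
        split <;> [exact le_rfl; exact hKnn]
      linarith
  have hHmono : Monotone H := by
    intro a b hab
    rcases le_or_gt b 0 with hb0 | hb0
    · rw [hHzero a (hab.trans hb0), hHzero b hb0]
    · rcases le_or_gt a 0 with ha0 | ha0
      · rw [hHzero a ha0]; exact hHnn b
      · rw [hHval a ha0, hHval b hb0]
        have hT := hTf_anti a b ha0 hab
        have h1 : β B (max (Tf a - 1) 0) ≤ β B (max (Tf b - 1) 0) :=
          hβ.2.1 B hB |>.1 (Set.mem_Ici.mpr (le_max_right _ _)) (Set.mem_Ici.mpr (le_max_right _ _))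
            (max_le_max (sub_le_sub_right hT 1) le_rfl)
        have h2 : γhat (Real.sqrt a) ≤ γhat (Real.sqrt b) :=
          hγmono (Real.sqrt_nonneg a) (Real.sqrt_nonneg b) (Real.sqrt_le_sqrt hab)
        have h3 : (if 2 ≤ Tf a then (0:ℝ) else K) ≤ (if 2 ≤ Tf b then (0:ℝ) else K) := by
          rcases le_or_gt 2 (Tf b) with h2b | h2b
          · rw [if_pos h2b, if_pos (h2b.trans hT)]
          · rw [if_neg (not_le.2 h2b)]
            split <;> [exact hKnn; exact le_rfl]
        linarith
  have hHtend : Tendsto H (nhdsWithin 0 (Set.Ici 0)) (nhds 0) := by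
    rw [show Set.Ici (0:ℝ) = insert 0 (Set.Ioi 0) from Set.Ioi_insert.symm,
      nhdsWithin_insert, tendsto_sup]
    constructor
    · have h := tendsto_pure_nhds H 0
      rwa [hHzero 0 le_rfl] at h
    · have hTfatTop : Tendsto Tf (nhdsWithin 0 (Set.Ioi 0)) atTop := by
        rw [Filter.tendsto_atTop]
        intro M
        have hwM := (hw (max M 0) (le_max_right M 0)).1
        have hmem : Set.Ioo (0:ℝ) (w (max M 0) ^ 2) ∈ nhdsWithin 0 (Set.Ioi 0) :=
          Ioo_mem_nhdsGT_of_mem ⟨le_rfl, by positivity⟩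
        filter_upwards [hmem] with δ hδ
        have hsq : Real.sqrt δ ≤ w (max M 0) := by
          have h1 : Real.sqrt δ < Real.sqrt (w (max M 0) ^ 2) :=
            Real.sqrt_lt_sqrt hδ.1.le hδ.2
          rw [Real.sqrt_sq hwM.le] at h1
          exact h1.le
        exact le_trans (le_max_left M 0) (hTf_ge δ hδ.1 _ (le_max_right M 0) hsq)
      have h1 : Tendsto (fun δ => β B (max (Tf δ - 1) 0)) (nhdsWithin 0 (Set.Ioi 0)) (nhds 0) := by
        apply (hβ.2.1 B hB).2.comp
        apply tendsto_atTop_mono (fun δ => le_max_left (Tf δ - 1) 0)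
        have := tendsto_atTop_add_const_right _ (-1 : ℝ) hTfatTop
        simpa [sub_eq_add_neg] using this
      have h2 : Tendsto (fun δ => γhat (Real.sqrt δ)) (nhdsWithin 0 (Set.Ioi 0)) (nhds 0) := by
        have hγc : Tendsto γhat (nhdsWithin 0 (Set.Ici 0)) (nhds 0) := by
          have h := (hγ.1 0 Set.self_mem_Ici)
          rwa [ContinuousWithinAt, hγ0] at h
        apply hγc.comp
        apply tendsto_nhdsWithin_of_tendsto_nhds_of_eventually_within
        · have h := Real.continuous_sqrt.tendsto 0
          rw [Real.sqrt_zero] at h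
          exact h.mono_left nhdsWithin_le_nhds
        · filter_upwards with δ using Real.sqrt_nonneg δ
      have h3 : Tendsto (fun δ => if 2 ≤ Tf δ then (0:ℝ) else K)
          (nhdsWithin 0 (Set.Ioi 0)) (nhds 0) := by
        apply Tendsto.congr' _ tendsto_const_nhds
        filter_upwards [hTfatTop.eventually_ge_atTop 2] with δ h
        rw [if_pos h]
      have hsum : Tendsto (fun δ => β B (max (Tf δ - 1) 0) + γhat (Real.sqrt δ) +
          (if 2 ≤ Tf δ then (0:ℝ) else K)) (nhdsWithin 0 (Set.Ioi 0)) (nhds 0) := by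
        have := (h1.add h2).add h3
        simpa using this
      apply Tendsto.congr' _ hsum
      filter_upwards [self_mem_nhdsWithin] with δ hδ
      exact (hHval δ hδ).symm
  obtain ⟨γ, hγK, hγge⟩ := kinf_majorant H hHmono hHzero hHtend
  refine ⟨γ, hγK, ?_⟩
  intro t0 x u hISS hx0 hu t ht
  have hUsup : ∀ a b C : ℝ, a < b → 0 ≤ C → (∀ s ∈ Set.Ico a b, ‖u s‖ ≤ C) →
      γhat (sSup ((fun s => ‖u s‖) '' Set.Ico a b)) ≤ γhat C := by
    intro a b C hab hC hbound
    have hbddU : BddAbove ((fun s => ‖u s‖) '' Set.Ico a b) := by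
      refine ⟨C, ?_⟩
      rintro y ⟨s, hs, rfl⟩
      exact hbound s hs
    have hmemU : ‖u a‖ ∈ (fun s => ‖u s‖) '' Set.Ico a b := ⟨a, ⟨le_rfl, hab⟩, rfl⟩
    have h0 : (0:ℝ) ≤ sSup ((fun s => ‖u s‖) '' Set.Ico a b) :=
      le_trans (norm_nonneg (u a)) (le_csSup hbddU hmemU)
    have hle : sSup ((fun s => ‖u s‖) '' Set.Ico a b) ≤ C := by
      apply Real.sSup_le _ hC
      rintro y ⟨s, hs, rfl⟩
      exact hbound s hs
    exact hγmono h0 hC hle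
  set δ : ℝ := sSup ((fun s => ‖u s‖ * w (t - s)) '' Set.Ico t0 t) with hδdef
  have htw : ∀ s ∈ Set.Ico t0 t, 0 < w (t - s) ∧ w (t - s) ≤ 1 := by
    intro s hs
    exact hw (t - s) (by linarith [hs.2])
  have hSbdd : BddAbove ((fun s => ‖u s‖ * w (t - s)) '' Set.Ico t0 t) := by
    refine ⟨Mu, ?_⟩
    rintro y ⟨s, hs, rfl⟩
    calc ‖u s‖ * w (t - s) ≤ Mu * 1 :=
          mul_le_mul (hu s hs.1) (htw s hs).2 (htw s hs).1.le hMu.le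
      _ = Mu := mul_one Mu
  have helem : ∀ s ∈ Set.Ico t0 t, ‖u s‖ * w (t - s) ≤ δ := by
    intro s hs
    exact le_csSup hSbdd ⟨s, hs, rfl⟩
  have hmem0 : t0 ∈ Set.Ico t0 t := ⟨le_rfl, ht⟩
  have hδnn : 0 ≤ δ :=
    le_trans (mul_nonneg (norm_nonneg _) (htw t0 hmem0).1.le) (helem t0 hmem0)
  have hγδ : H δ ≤ γ δ := hγge δ hδnn
  have hβr0nn : 0 ≤ β (Metric.infDist (x t0) A) (t - t0) :=
    hβ.2.2 _ Metric.infDist_nonneg _ (by linarith)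
  suffices h : Metric.infDist (x t) A ≤ β (Metric.infDist (x t0) A) (t - t0) + H δ by
    linarith
  rcases eq_or_lt_of_le hδnn with hδ0 | hδpos
  · have hueq : ∀ s ∈ Set.Ico t0 t, ‖u s‖ ≤ 0 := by
      intro s hs
      have h1 := helem s hs
      have h2 := (htw s hs).1
      nlinarith [norm_nonneg (u s)]
    have h1 := hISS t0 t le_rfl ht.le
    have h2 := hUsup t0 t 0 ht le_rfl hueq
    rw [hγ0] at h2
    rw [hHzero δ hδ0.ge]
    linarith
  · have hsd : 0 < Real.sqrt δ := Real.sqrt_pos.2 hδpos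
    have hdiv : ∀ s ∈ Set.Ico t0 t, Real.sqrt δ ≤ w (t - s) → ‖u s‖ ≤ Real.sqrt δ := by
      intro s hs hws
      have h1 : ‖u s‖ * Real.sqrt δ ≤ ‖u s‖ * w (t - s) :=
        mul_le_mul_of_nonneg_left hws (norm_nonneg _)
      have h2 := helem s hs
      have h3 : Real.sqrt δ * Real.sqrt δ = δ := Real.mul_self_sqrt hδnn
      exact le_of_mul_le_mul_right (by linarith) hsd
    have hHval' := hHval δ hδpos
    by_cases hTf2 : 2 ≤ Tf δ
    · have hT1 : (1:ℝ) ≤ Tf δ - 1 := by linarith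
      have hTm : max (Tf δ - 1) 0 = Tf δ - 1 := max_eq_left (by linarith)
      have hne : {T' : ℝ | 0 ≤ T' ∧ Real.sqrt δ ≤ w T'}.Nonempty := by
        by_contra hc
        rw [Set.not_nonempty_iff_eq_empty] at hc
        have h0 : Tf δ = 0 := by simp only [hTfdef, hc, Real.sSup_empty]
        linarith
      have hwT : ∀ s', 0 ≤ s' → s' ≤ Tf δ - 1 → Real.sqrt δ ≤ w s' := by
        intro s' h0 hsT
        have hlt : Tf δ - 1 < Tf δ := by linarith
        obtain ⟨T'', hT''mem, hT''gt⟩ := exists_lt_of_lt_csSup hne hlt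
        calc Real.sqrt δ ≤ w T'' := hT''mem.2
          _ ≤ w s' := hwdec h0 hT''mem.1 (by linarith)
      by_cases hcase : t - t0 ≤ Tf δ - 1
      · have hub : ∀ s ∈ Set.Ico t0 t, ‖u s‖ ≤ Real.sqrt δ := fun s hs =>
          hdiv s hs (hwT (t - s) (by linarith [hs.2]) (by linarith [hs.1]))
        have h1 := hISS t0 t le_rfl ht.le
        have h2 := hUsup t0 t (Real.sqrt δ) ht hsd.le hub
        have h3 : (0:ℝ) ≤ if 2 ≤ Tf δ then 0 else K := by rw [if_pos hTf2]
        have hb1 : 0 ≤ β B (max (Tf δ - 1) 0) := hβBnn _ (le_max_right _ _)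
        rw [hHval']
        linarith
      · push_neg at hcase
        set t1 : ℝ := t - (Tf δ - 1) with ht1def
        have ht01 : t0 < t1 := by rw [ht1def]; linarith
        have ht1t : t1 < t := by rw [ht1def]; linarith
        have hA1 := hISS t0 t1 le_rfl ht01.le
        have hA2 : γhat (sSup ((fun s => ‖u s‖) '' Set.Ico t0 t1)) ≤ γhat Mu :=
          hUsup t0 t1 Mu ht01 hMu.le (fun s hs => hu s hs.1)
        have hβm : β (Metric.infDist (x t0) A) (t1 - t0) ≤ β Mx0 (t1 - t0) :=
          ((hβ.1 (t1 - t0) (by simp; linarith)).2.1.monotoneOn)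
            Metric.infDist_nonneg hMx0.le hx0
        have hβm2 : β Mx0 (t1 - t0) ≤ β Mx0 0 :=
          (hβ.2.1 Mx0 hMx0).1 Set.self_mem_Ici (by simp; linarith) (by linarith)
        have hxt1 : Metric.infDist (x t1) A ≤ B := by rw [hBdef]; linarith
        have hB2 := hISS t1 t (by linarith) ht1t.le
        have htT : t - t1 = Tf δ - 1 := by rw [ht1def]; ring
        rw [htT] at hB2
        have hβm3 : β (Metric.infDist (x t1) A) (Tf δ - 1) ≤ β B (Tf δ - 1) :=
          ((hβ.1 (Tf δ - 1) (by simp; linarith)).2.1.monotoneOn)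
            Metric.infDist_nonneg hB.le hxt1
        have hub2 : ∀ s ∈ Set.Ico t1 t, ‖u s‖ ≤ Real.sqrt δ := by
          intro s hs
          refine hdiv s ⟨by linarith [hs.1], hs.2⟩ ?_
          refine hwT (t - s) (by linarith [hs.2]) ?_
          have := hs.1
          rw [ht1def] at this
          linarith
        have hγ2 := hUsup t1 t (Real.sqrt δ) ht1t hsd.le hub2
        have h3 : (0:ℝ) ≤ if 2 ≤ Tf δ then 0 else K := by rw [if_pos hTf2]
        rw [hHval', hTm]
        linarith
    · have h1 := hISS t0 t le_rfl ht.le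
      have h2 := hUsup t0 t Mu ht hMu.le (fun s hs => hu s hs.1)
      have hb1 : 0 ≤ β B (max (Tf δ - 1) 0) := hβBnn _ (le_max_right _ _)
      have hb2 : 0 ≤ γhat (Real.sqrt δ) := hγnn _ (Real.sqrt_nonneg δ)
      have hb3 : 0 ≤ β B 0 := hβBnn 0 le_rfl
      rw [hHval', if_neg hTf2, hKdef]
      linarith
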